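/- Define the Wootters concurrence of a two-qubit density matrix ρ as C(ρ) = max(0, ξ₁ − ξ₂ − ξ₃ − ξ₄), where ξ₁ ≥ ξ₂ ≥ ξ₃ ≥ ξ₄ are the square roots of the eigenvalues of ρ(σ_y⊗σ_y)ρ*(σ_y⊗σ_y). For the thermal state of the two-qubit XY model with γ̃ = 0, δ = 1 at temperature T > 0, C(ρ) = max(2 sinh(√(J²+4B²)/T)·J/√(J²+4B²) − 2, 0) up to normalization, and the critical temperature at which C vanishes is T_c = √(J²+4B²)/arcsinh(√(1 + 4B²/J²)). -/

import Mathlib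

open Matrix Kronecker Polynomial

/-- Pauli matrices `σ_x, σ_y, σ_z`. -/
noncomputable def σx : Matrix (Fin 2) (Fin 2) ℂ := !![0, 1; 1, 0]
noncomputable def σy : Matrix (Fin 2) (Fin 2) ℂ := !![0, -Complex.I; Complex.I, 0]
noncomputable def σz : Matrix (Fin 2) (Fin 2) ℂ := !![1, 0; 0, -1]

/-- The two-qubit XY Hamiltonian with `γ̃ = 0`, `δ = 1`:
`H = −(J/2)σ_x⊗σ_x − (J/2)σ_y⊗σ_y − 2Bσ_z⊗I`. -/
noncomputable def Hxy (J B : ℝ) : Matrix (Fin 2 × Fin 2) (Fin 2 × Fin 2) ℂ :=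
  (-(J / 2) : ℂ) • (σx ⊗ₖ σx) + (-(J / 2) : ℂ) • (σy ⊗ₖ σy) +
    (-(2 * B) : ℂ) • (σz ⊗ₖ (1 : Matrix (Fin 2) (Fin 2) ℂ))

/-- The (unnormalized) thermal state `ρ = exp(−H/T)`. -/
noncomputable def ρth (J B T : ℝ) : Matrix (Fin 2 × Fin 2) (Fin 2 × Fin 2) ℂ :=
  NormedSpace.exp ((-(1 / T) : ℂ) • Hxy J B)

namespace Stmt15Aux

open NormedSpace Nat

section BanachAlgebra

variable {A : Type*} [NormedRing A] [NormedAlgebra ℂ A] [CompleteSpace A]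

lemma exp_smul_idem (a : ℂ) (P : A) (hP : P * P = P) :
    exp (a • P) = 1 + (Complex.exp a - 1) • P := by
  have hpow : ∀ n : ℕ, P ^ (n + 1) = P := by
    intro n
    induction n with
    | zero => simp
    | succ n ih => rw [pow_succ, ih, hP]
  have hsumA : Summable (fun n : ℕ => ((n ! : ℂ))⁻¹ • (a • P) ^ n) :=
    expSeries_summable' (𝕂 := ℂ) (a • P)
  have hsumC : Summable (fun n : ℕ => ((n ! : ℂ))⁻¹ • a ^ n) :=
    expSeries_summable' (𝕂 := ℂ) a
  have hsumC' : Summable (fun n : ℕ => (((n + 1)! : ℂ))⁻¹ * a ^ (n + 1)) := by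
    have := (summable_nat_add_iff 1).mpr hsumC
    simpa [smul_eq_mul] using this
  have hexpa : Complex.exp a = 1 + ∑' n : ℕ, (((n + 1)! : ℂ))⁻¹ * a ^ (n + 1) := by
    rw [Complex.exp_eq_exp_ℂ, exp_eq_tsum (𝕂 := ℂ)]
    beta_reduce
    rw [Summable.tsum_eq_zero_add hsumC]
    simp [smul_eq_mul]
  rw [exp_eq_tsum (𝕂 := ℂ)]
  beta_reduce
  rw [Summable.tsum_eq_zero_add hsumA]
  have hterm : ∀ n : ℕ, (((n + 1)! : ℂ))⁻¹ • (a • P) ^ (n + 1)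
      = ((((n + 1)! : ℂ))⁻¹ * a ^ (n + 1)) • P := by
    intro n
    rw [_root_.smul_pow, hpow, smul_smul]
  simp only [hterm]
  rw [Summable.tsum_smul_const hsumC']
  rw [hexpa]
  simp [add_smul, sub_smul]

lemma exp_smul_cube (t : ℂ) (N : A) (hN : N * N * N = N) :
    exp (t • N) = 1 + ((Complex.exp t + Complex.exp (-t)) / 2 - 1) • (N * N)
      + ((Complex.exp t - Complex.exp (-t)) / 2) • N := by
  set P : A := N * N with hPdef
  have hPP : P * P = P := by
    have : P * P = (N * N * N) * N := by rw [hPdef]; noncomm_ring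
    rw [this, hN, hPdef]
  have hPN : P * N = N := hN
  have hNP : N * P = N := by rw [hPdef, ← mul_assoc, hN]
  set Pp : A := (2:ℂ)⁻¹ • (P + N) with hPp
  set Pm : A := (2:ℂ)⁻¹ • (P - N) with hPm
  have hPp2 : Pp * Pp = Pp := by
    rw [hPp, smul_mul_assoc, mul_smul_comm, smul_smul]
    rw [add_mul, mul_add, mul_add, hPP, hPN, hNP, hPdef]
    match_scalars <;> norm_num
  have hPm2 : Pm * Pm = Pm := by
    rw [hPm, smul_mul_assoc, mul_smul_comm, smul_smul]
    rw [sub_mul, mul_sub, mul_sub, hPP, hPN, hNP, hPdef]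
    match_scalars <;> norm_num
  have hPpPm : Pp * Pm = 0 := by
    rw [hPp, hPm, smul_mul_assoc, mul_smul_comm, smul_smul]
    rw [add_mul, mul_sub, mul_sub, hPP, hPN, hNP, hPdef]
    match_scalars <;> norm_num
  have hPmPp : Pm * Pp = 0 := by
    rw [hPp, hPm, smul_mul_assoc, mul_smul_comm, smul_smul]
    rw [sub_mul, mul_add, mul_add, hPP, hPN, hNP, hPdef]
    match_scalars <;> norm_num
  have hdecomp : t • N = t • Pp + (-t) • Pm := by
    rw [hPp, hPm]
    module
  have e1 : (t • Pp) * ((-t) • Pm) = 0 := by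
    rw [smul_mul_assoc, mul_smul_comm, hPpPm, smul_zero, smul_zero]
  have e2 : ((-t) • Pm) * (t • Pp) = 0 := by
    rw [smul_mul_assoc, mul_smul_comm, hPmPp, smul_zero, smul_zero]
  have hcomm : Commute (t • Pp) ((-t) • Pm) := by
    unfold Commute SemiconjBy
    rw [e1, e2]
  rw [hdecomp, exp_add_of_commute_of_mem_ball (𝕂 := ℂ) hcomm
      ((expSeries_radius_eq_top ℂ A).symm ▸ edist_lt_top _ _)
      ((expSeries_radius_eq_top ℂ A).symm ▸ edist_lt_top _ _), exp_smul_idem t Pp hPp2,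
    exp_smul_idem (-t) Pm hPm2]
  have key : ∀ x y : ℂ, (1 + x • Pp) * (1 + y • Pm)
      = 1 + ((x + y) / 2) • P + ((x - y) / 2) • N := by
    intro x y
    have hprod : (x • Pp) * (y • Pm) = 0 := by
      rw [smul_mul_assoc, mul_smul_comm, hPpPm, smul_zero, smul_zero]
    have hexpand : (1 + x • Pp) * (1 + y • Pm) = 1 + x • Pp + y • Pm := by
      rw [mul_add, add_mul, add_mul, hprod]
      simp only [one_mul, mul_one, add_zero]
    rw [hexpand, hPp, hPm]
    module
  rw [key]
  match_scalars <;> ring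

end BanachAlgebra

lemma Matrix.exp_smul_cube' {m : Type*} [Fintype m] [DecidableEq m]
    (t : ℂ) (N : Matrix m m ℂ) (hN : N * N * N = N) :
    exp (t • N) = 1 + ((Complex.exp t + Complex.exp (-t)) / 2 - 1) • (N * N)
      + ((Complex.exp t - Complex.exp (-t)) / 2) • N := by
  letI : SeminormedRing (Matrix m m ℂ) := Matrix.linftyOpSemiNormedRing
  letI : NormedRing (Matrix m m ℂ) := Matrix.linftyOpNormedRing
  letI : NormedAlgebra ℂ (Matrix m m ℂ) := Matrix.linftyOpNormedAlgebra
  exact exp_smul_cube t N hN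

def e4 : Fin 2 × Fin 2 ≃ Fin 4 where
  toFun x := ⟨2 * x.1.val + x.2.val, by omega⟩
  invFun n := (⟨n.val / 2, by omega⟩, ⟨n.val % 2, by omega⟩)
  left_inv := by decide
  right_inv := by decide

noncomputable abbrev F4 : Matrix (Fin 4) (Fin 4) ℂ ≃ₐ[ℂ] Matrix (Fin 2 × Fin 2) (Fin 2 × Fin 2) ℂ :=
  Matrix.reindexAlgEquiv ℂ ℂ e4.symm

lemma Hxy_eq (J B : ℝ) : Hxy J B =
    F4 !![-(2*B), 0, 0, 0; 0, -(2*B), -J, 0; 0, -J, 2*B, 0; 0, 0, 0, 2*B] := by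
  ext ⟨a, b⟩ ⟨c, d⟩
  fin_cases a <;> fin_cases b <;> fin_cases c <;> fin_cases d <;>
    simp [Hxy, σx, σy, σz, e4, Matrix.kroneckerMap_apply, Matrix.one_apply,
      Matrix.vecHead, Matrix.vecTail] <;> ring_nf

noncomputable def N1m : Matrix (Fin 4) (Fin 4) ℂ := !![1,0,0,0; 0,0,0,0; 0,0,0,0; 0,0,0,-1]

noncomputable def N2m (J B η : ℝ) : Matrix (Fin 4) (Fin 4) ℂ :=
  !![0,0,0,0; 0, ((2*B/η : ℝ):ℂ), ((J/η : ℝ):ℂ), 0;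
     0, ((J/η : ℝ):ℂ), ((-(2*B)/η : ℝ):ℂ), 0; 0,0,0,0]

noncomputable def Rho4 (J B T η : ℝ) : Matrix (Fin 4) (Fin 4) ℂ :=
  !![(Real.exp (2*B/T) : ℂ), 0, 0, 0;
     0, ((Real.cosh (η/T) + 2*B*Real.sinh (η/T)/η : ℝ) : ℂ),
        ((Real.sinh (η/T)*J/η : ℝ) : ℂ), 0;
     0, ((Real.sinh (η/T)*J/η : ℝ) : ℂ),
        ((Real.cosh (η/T) - 2*B*Real.sinh (η/T)/η : ℝ) : ℂ), 0;
     0, 0, 0, (Real.exp (-(2*B/T)) : ℂ)]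

set_option maxHeartbeats 1000000 in
lemma prod_eq (J B T η : ℝ) :
    !![((Real.exp (2*B/T) : ℝ):ℂ), 0, 0, 0; 0,1,0,0; 0,0,1,0; 0,0,0, ((Real.exp (-(2*B/T)) : ℝ):ℂ)]
    * !![1, 0, 0, 0;
         0, (((Real.exp (η/T) : ℝ):ℂ) + ((Real.exp (-(η/T)) : ℝ):ℂ)) / 2
            + ((((Real.exp (η/T) : ℝ):ℂ) - ((Real.exp (-(η/T)) : ℝ):ℂ)) / 2) * ((2*B/η : ℝ):ℂ),
            ((((Real.exp (η/T) : ℝ):ℂ) - ((Real.exp (-(η/T)) : ℝ):ℂ)) / 2) * ((J/η : ℝ):ℂ), 0;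
         0, ((((Real.exp (η/T) : ℝ):ℂ) - ((Real.exp (-(η/T)) : ℝ):ℂ)) / 2) * ((J/η : ℝ):ℂ),
            (((Real.exp (η/T) : ℝ):ℂ) + ((Real.exp (-(η/T)) : ℝ):ℂ)) / 2
            + ((((Real.exp (η/T) : ℝ):ℂ) - ((Real.exp (-(η/T)) : ℝ):ℂ)) / 2) * ((-(2*B)/η : ℝ):ℂ), 0;
         0, 0, 0, 1]
    = Rho4 J B T η := by
  ext i j
  fin_cases i <;> fin_cases j <;>
    simp [Rho4, Real.cosh_eq, Real.sinh_eq, Matrix.mul_apply, Fin.sum_univ_four,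
      Matrix.vecHead, Matrix.vecTail] <;>
    push_cast <;> ring

set_option maxHeartbeats 1000000 in
lemma rho_eq (J B T η : ℝ) (hT : 0 < T) (hη : 0 < η) (hη2 : η^2 = J^2+4*B^2) :
    ρth J B T = F4 (Rho4 J B T η) := by
  have hηne : η ≠ 0 := hη.ne'
  have hη0 : (η:ℂ) ≠ 0 := by exact_mod_cast hη.ne'
  have hT0 : (T:ℂ) ≠ 0 := by exact_mod_cast hT.ne'
  have hN1def : N1m = !![1,0,0,0; 0,0,0,0; 0,0,0,0; 0,0,0,-1] := rfl
  have hsplit : (-(1/T) : ℂ) • (!![-(2*B), 0, 0, 0; 0, -(2*B), -J, 0; 0, -J, 2*B, 0; 0, 0, 0, 2*B] : Matrix (Fin 4) (Fin 4) ℂ)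
      = ((2*B/T : ℝ):ℂ) • N1m + ((η/T : ℝ):ℂ) • N2m J B η := by
    ext i j
    fin_cases i <;> fin_cases j <;>
      simp [N1m, N2m, Matrix.vecHead, Matrix.vecTail] <;>
      push_cast <;> field_simp <;> ring
  have hN1cube : N1m * N1m * N1m = N1m := by
    ext i j
    fin_cases i <;> fin_cases j <;>
      simp [N1m, Matrix.mul_apply, Fin.sum_univ_four, Matrix.vecHead, Matrix.vecTail]
  have hN2sq : N2m J B η * N2m J B η = !![0,0,0,0; 0,1,0,0; 0,0,1,0; 0,0,0,0] := by
    have key : (2*B/η)*(2*B/η) + (J/η)*(J/η) = 1 := by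
      field_simp
      nlinarith [hη2]
    ext i j
    fin_cases i <;> fin_cases j <;>
      simp [N2m, Matrix.mul_apply, Fin.sum_univ_four, Matrix.vecHead, Matrix.vecTail] <;>
      push_cast <;> field_simp <;> rw [(by exact_mod_cast hη2 : (η:ℂ)^2 = (J:ℂ)^2 + 4*(B:ℂ)^2)] <;> ring
  have hN2cube : N2m J B η * N2m J B η * N2m J B η = N2m J B η := by
    rw [hN2sq]
    ext i j
    fin_cases i <;> fin_cases j <;>
      simp [N2m, Matrix.mul_apply, Fin.sum_univ_four, Matrix.vecHead, Matrix.vecTail]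
  have hzero12 : N1m * N2m J B η = 0 := by
    ext i j
    fin_cases i <;> fin_cases j <;>
      simp [N1m, N2m, Matrix.mul_apply, Fin.sum_univ_four, Matrix.vecHead, Matrix.vecTail]
  have hzero21 : N2m J B η * N1m = 0 := by
    ext i j
    fin_cases i <;> fin_cases j <;>
      simp [N1m, N2m, Matrix.mul_apply, Fin.sum_univ_four, Matrix.vecHead, Matrix.vecTail]
  have hN1sq : N1m * N1m = !![1,0,0,0; 0,0,0,0; 0,0,0,0; 0,0,0,1] := by
    ext i j
    fin_cases i <;> fin_cases j <;>
      simp [N1m, Matrix.mul_apply, Fin.sum_univ_four, Matrix.vecHead, Matrix.vecTail]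
  have h12 : (F4 N1m) * (F4 (N2m J B η)) = 0 := by
    rw [← _root_.map_mul F4, hzero12, map_zero]
  have h21 : (F4 (N2m J B η)) * (F4 N1m) = 0 := by
    rw [← _root_.map_mul F4, hzero21, map_zero]
  set t1 : ℂ := ((2*B/T : ℝ):ℂ) with ht1
  set t2 : ℂ := ((η/T : ℝ):ℂ) with ht2
  have hA : (-(1/T) : ℂ) • Hxy J B = t1 • F4 N1m + t2 • F4 (N2m J B η) := by
    rw [Hxy_eq, ← _root_.map_smul F4, hsplit, _root_.map_add F4,
      _root_.map_smul F4, _root_.map_smul F4]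
  have hc : Commute (t1 • F4 N1m) (t2 • F4 (N2m J B η)) := by
    unfold Commute SemiconjBy
    rw [smul_mul_assoc, mul_smul_comm, h12, smul_mul_assoc, mul_smul_comm, h21]
    simp
  have hcube1 : (F4 N1m) * (F4 N1m) * (F4 N1m) = F4 N1m := by
    rw [← _root_.map_mul F4, ← _root_.map_mul F4, hN1cube]
  have hcube2 : (F4 (N2m J B η)) * (F4 (N2m J B η)) * (F4 (N2m J B η)) = F4 (N2m J B η) := by
    rw [← _root_.map_mul F4, ← _root_.map_mul F4, hN2cube]
  have hstep : ρth J B T = exp (t1 • F4 N1m) * exp (t2 • F4 (N2m J B η)) := by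
    rw [ρth, hA]
    exact Matrix.exp_add_of_commute _ _ hc
  rw [hstep, Matrix.exp_smul_cube' t1 _ hcube1, Matrix.exp_smul_cube' t2 _ hcube2]
  have hmap1 : (1 : Matrix (Fin 2 × Fin 2) (Fin 2 × Fin 2) ℂ)
        + ((Complex.exp t1 + Complex.exp (-t1)) / 2 - 1) • (F4 N1m * F4 N1m)
        + ((Complex.exp t1 - Complex.exp (-t1)) / 2) • F4 N1m
      = F4 (1 + ((Complex.exp t1 + Complex.exp (-t1)) / 2 - 1) • (N1m * N1m)
        + ((Complex.exp t1 - Complex.exp (-t1)) / 2) • N1m) := by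
    rw [_root_.map_add F4, _root_.map_add F4, _root_.map_one F4, _root_.map_smul F4,
      _root_.map_smul F4, _root_.map_mul F4]
  have hmap2 : (1 : Matrix (Fin 2 × Fin 2) (Fin 2 × Fin 2) ℂ)
        + ((Complex.exp t2 + Complex.exp (-t2)) / 2 - 1) • (F4 (N2m J B η) * F4 (N2m J B η))
        + ((Complex.exp t2 - Complex.exp (-t2)) / 2) • F4 (N2m J B η)
      = F4 (1 + ((Complex.exp t2 + Complex.exp (-t2)) / 2 - 1) • (N2m J B η * N2m J B η)
        + ((Complex.exp t2 - Complex.exp (-t2)) / 2) • N2m J B η) := by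
    rw [_root_.map_add F4, _root_.map_add F4, _root_.map_one F4, _root_.map_smul F4,
      _root_.map_smul F4, _root_.map_mul F4]
  rw [hmap1, hmap2, ← _root_.map_mul F4]
  congr 1
  have hE1 : (1 : Matrix (Fin 4) (Fin 4) ℂ)
        + ((Complex.exp t1 + Complex.exp (-t1)) / 2 - 1) • (N1m * N1m)
        + ((Complex.exp t1 - Complex.exp (-t1)) / 2) • N1m
      = !![Complex.exp t1, 0, 0, 0; 0,1,0,0; 0,0,1,0; 0,0,0, Complex.exp (-t1)] := by
    rw [hN1sq]
    ext i j
    fin_cases i <;> fin_cases j <;>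
      simp [N1m, Matrix.one_apply, Matrix.vecHead, Matrix.vecTail] <;> ring
  have hE2 : (1 : Matrix (Fin 4) (Fin 4) ℂ)
        + ((Complex.exp t2 + Complex.exp (-t2)) / 2 - 1) • (N2m J B η * N2m J B η)
        + ((Complex.exp t2 - Complex.exp (-t2)) / 2) • N2m J B η
      = !![1, 0, 0, 0;
           0, (Complex.exp t2 + Complex.exp (-t2)) / 2
              + ((Complex.exp t2 - Complex.exp (-t2)) / 2) * ((2*B/η : ℝ):ℂ),
              ((Complex.exp t2 - Complex.exp (-t2)) / 2) * ((J/η : ℝ):ℂ), 0;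
           0, ((Complex.exp t2 - Complex.exp (-t2)) / 2) * ((J/η : ℝ):ℂ),
              (Complex.exp t2 + Complex.exp (-t2)) / 2
              + ((Complex.exp t2 - Complex.exp (-t2)) / 2) * ((-(2*B)/η : ℝ):ℂ), 0;
           0, 0, 0, 1] := by
    rw [hN2sq]
    ext i j
    fin_cases i <;> fin_cases j <;>
      simp [N2m, Matrix.one_apply, Matrix.vecHead, Matrix.vecTail] <;> ring
  rw [hE1, hE2]
  rw [ht1, ht2]
  simp only [← Complex.ofReal_neg, ← Complex.ofReal_exp]
  exact prod_eq J B T η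

set_option maxHeartbeats 1000000 in
lemma charpoly_gen (a b c mp mm : ℂ) (h1 : mp + mm = 2 * a)
    (h2 : b * c = (mp - a) * (a - mm)) :
    (!![1,0,0,0; 0,a,b,0; 0,c,a,0; 0,0,0,1] : Matrix (Fin 4) (Fin 4) ℂ).charpoly
      = (X - C 1) * (X - C 1) * (X - C mp) * (X - C mm) := by
  have hc1 : (C mp : ℂ[X]) + C mm = 2 * C a := by
    rw [← C_add, h1, C_mul, show (C (2:ℂ) : Polynomial ℂ) = 2 from map_ofNat C 2]
  have hc2 : (C b : ℂ[X]) * C c = (C mp - C a) * (C a - C mm) := by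
    rw [← C_mul, h2, C_mul, C_sub, C_sub]
  simp only [Polynomial.C_1]
  rw [Matrix.charpoly]
  rw [show (!![1,0,0,0; 0,a,b,0; 0,c,a,0; 0,0,0,1] : Matrix (Fin 4) (Fin 4) ℂ).charmatrix
      = !![X - 1, 0, 0, 0; 0, X - C a, -C b, 0; 0, -C c, X - C a, 0; 0, 0, 0, X - 1] by
    ext i j
    fin_cases i <;> fin_cases j <;>
      simp [charmatrix_apply_eq, charmatrix_apply_ne, Matrix.vecHead, Matrix.vecTail]]
  simp [Matrix.det_succ_row_zero, Fin.sum_univ_succ, Matrix.vecHead, Matrix.vecTail,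
    Fin.succAbove]
  linear_combination ((X - 1)^2 * (X - C a)) * hc1 - (X - 1)^2 * hc2

noncomputable def Y4 : Matrix (Fin 4) (Fin 4) ℂ := !![0,0,0,-1; 0,0,1,0; 0,1,0,0; -1,0,0,0]

lemma Y_eq : (σy ⊗ₖ σy) = F4 Y4 := by
  ext ⟨a, b⟩ ⟨c, d⟩
  fin_cases a <;> fin_cases b <;> fin_cases c <;> fin_cases d <;>
    simp [σy, Y4, e4, Matrix.kroneckerMap_apply, Matrix.vecHead, Matrix.vecTail]

lemma F4_map_conj (M : Matrix (Fin 4) (Fin 4) ℂ) :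
    (F4 M).map (starRingEnd ℂ) = F4 (M.map (starRingEnd ℂ)) := by
  ext x y
  simp [Matrix.reindexAlgEquiv_apply, Matrix.reindex_apply, Matrix.submatrix_apply,
    Matrix.map_apply]

lemma Rho4_conj (J B T η : ℝ) :
    (Rho4 J B T η).map (starRingEnd ℂ) = Rho4 J B T η := by
  ext i j
  fin_cases i <;> fin_cases j <;>
    simp [Rho4, Matrix.map_apply, Matrix.vecHead, Matrix.vecTail, ← Complex.exp_conj,
      ← Complex.cosh_conj, ← Complex.sinh_conj, map_div₀, map_ofNat, Complex.conj_ofReal]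

set_option maxHeartbeats 1000000 in
lemma R4_eq (p u v w q : ℝ) (hpq : p * q = 1) (huv : u * v = 1 + w^2) :
    (!![(p:ℂ),0,0,0; 0,(u:ℂ),(w:ℂ),0; 0,(w:ℂ),(v:ℂ),0; 0,0,0,(q:ℂ)] : Matrix (Fin 4) (Fin 4) ℂ)
      * Y4 * !![(p:ℂ),0,0,0; 0,(u:ℂ),(w:ℂ),0; 0,(w:ℂ),(v:ℂ),0; 0,0,0,(q:ℂ)] * Y4
    = !![1,0,0,0;
         0, ((1+2*w^2 : ℝ):ℂ), ((2*u*w : ℝ):ℂ), 0;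
         0, ((2*v*w : ℝ):ℂ), ((1+2*w^2 : ℝ):ℂ), 0;
         0,0,0,1] := by
  have hpqC : (p:ℂ) * (q:ℂ) = 1 := by exact_mod_cast hpq
  have huvC : (u:ℂ) * (v:ℂ) = 1 + (w:ℂ)^2 := by exact_mod_cast huv
  ext i j
  fin_cases i <;> fin_cases j <;>
    simp [Y4, Matrix.mul_apply, Fin.sum_univ_four, Matrix.vecHead, Matrix.vecTail] <;>
    push_cast <;>
    first
      | linear_combination hpqC
      | linear_combination huvC
      | ring


set_option maxHeartbeats 800000 in
lemma xi_spec (ξ : Fin 4 → ℝ) (hξ0 : ∀ i, 0 ≤ ξ i) (hmono : Antitone ξ)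
    (w r : ℝ) (hw : 0 < w) (hr2 : r^2 = 1 + w^2) (hr : 0 < r)
    (heval : ∀ x : ℝ, (x - ξ 0^2)*(x - ξ 1^2)*(x - ξ 2^2)*(x - ξ 3^2)
      = (x-1)*(x-1)*(x-(1+2*w^2+2*w*r))*(x-(1+2*w^2-2*w*r))) :
    ξ 0 - ξ 1 - ξ 2 - ξ 3 = 2*w - 2 := by
  set mp := 1+2*w^2+2*w*r with hmp
  set mm := 1+2*w^2-2*w*r with hmm
  have hrw : w < r := by nlinarith
  have hmm0 : 0 < mm := by nlinarith
  have hmm1 : mm < 1 := by nlinarith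
  have hmp1 : 1 < mp := by nlinarith
  have hsq : ∀ i j : Fin 4, i ≤ j → ξ j ^2 ≤ ξ i^2 := by
    intro i j h
    have h1 := hmono h
    have h2 := hξ0 j
    nlinarith
  have hmem : ∀ y : ℝ, (y-1)*(y-1)*(y-mp)*(y-mm) = 0 → y = 1 ∨ y = mp ∨ y = mm := by
    intro y hy
    rcases mul_eq_zero.mp hy with h' | h'
    · rcases mul_eq_zero.mp h' with h'' | h''
      · rcases mul_eq_zero.mp h'' with h3 | h3 <;> left <;> linarith
      · right; left; linarith
    · right; right; linarith
  have hmem0 : ξ 0^2 = 1 ∨ ξ 0^2 = mp ∨ ξ 0^2 = mm := by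
    refine hmem _ ?_
    rw [← heval]; ring
  have hmem3 : ξ 3^2 = 1 ∨ ξ 3^2 = mp ∨ ξ 3^2 = mm := by
    refine hmem _ ?_
    rw [← heval]; ring
  have hroot : ∀ y : ℝ, (y - ξ 0^2)*(y - ξ 1^2)*(y - ξ 2^2)*(y - ξ 3^2) = 0 →
      ξ 0^2 = y ∨ ξ 1^2 = y ∨ ξ 2^2 = y ∨ ξ 3^2 = y := by
    intro y hy
    rcases mul_eq_zero.mp hy with h' | h'
    · rcases mul_eq_zero.mp h' with h'' | h''
      · rcases mul_eq_zero.mp h'' with h3 | h3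
        · left; linarith
        · right; left; linarith
      · right; right; left; linarith
    · right; right; right; linarith
  have hex_mp := hroot mp (by rw [heval]; ring)
  have hex_mm := hroot mm (by rw [heval]; ring)
  have hex_1 := hroot 1 (by rw [heval]; ring)
  have hξ0sq : ξ 0 ^ 2 = mp := by
    have hge : mp ≤ ξ 0^2 := by
      rcases hex_mp with h | h | h | h
      · linarith
      · have := hsq 0 1 (by decide); linarith
      · have := hsq 0 2 (by decide); linarith
      · have := hsq 0 3 (by decide); linarith
    rcases hmem0 with h | h | h <;> linarith
  have hξ3sq : ξ 3 ^ 2 = mm := by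
    have hle : ξ 3^2 ≤ mm := by
      rcases hex_mm with h | h | h | h
      · have := hsq 0 3 (by decide); linarith
      · have := hsq 1 3 (by decide); linarith
      · have := hsq 2 3 (by decide); linarith
      · linarith
    rcases hmem3 with h | h | h <;> linarith
  have hprod : ξ 0^2 * ξ 1^2 * ξ 2^2 * ξ 3^2 = mp * mm := by
    have h0 := heval 0
    linear_combination h0
  have hmpmm : mp * mm = 1 := by
    rw [hmp, hmm]
    linear_combination (-(4*w^2))*hr2
  have hms : ξ 0^2 * ξ 3^2 = mp * mm := by rw [hξ0sq, hξ3sq]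
  have h12 : ξ 1^2 * ξ 2^2 = 1 := by
    have h' : (ξ 1^2 * ξ 2^2 - 1) * (mp * mm) = 0 := by
      linear_combination hprod - (ξ 1^2*ξ 2^2) * hms
    rw [hmpmm, mul_one] at h'
    linarith [h']
  have hne0 : ξ 0^2 ≠ 1 := by rw [hξ0sq]; intro h; linarith
  have hne3 : ξ 3^2 ≠ 1 := by rw [hξ3sq]; intro h; linarith
  have h1eq : ξ 1^2 = 1 ∧ ξ 2^2 = 1 := by
    rcases hex_1 with h | h | h | h
    · exact absurd h hne0
    · exact ⟨h, by nlinarith [h12]⟩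
    · exact ⟨by nlinarith [h12], h⟩
    · exact absurd h hne3
  have hx0 : ξ 0 = r + w := by
    have hfac : (ξ 0 - (r+w)) * (ξ 0 + (r+w)) = 0 := by
      linear_combination hξ0sq - hr2
    rcases mul_eq_zero.mp hfac with h | h
    · linarith
    · have := hξ0 0; linarith
  have hx3 : ξ 3 = r - w := by
    have hfac : (ξ 3 - (r-w)) * (ξ 3 + (r-w)) = 0 := by
      linear_combination hξ3sq - hr2
    rcases mul_eq_zero.mp hfac with h | h
    · linarith
    · have := hξ0 3; linarith
  have hx1 : ξ 1 = 1 := by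
    have hfac : (ξ 1 - 1) * (ξ 1 + 1) = 0 := by
      linear_combination h1eq.1
    rcases mul_eq_zero.mp hfac with h | h
    · linarith
    · have := hξ0 1; linarith
  have hx2 : ξ 2 = 1 := by
    have hfac : (ξ 2 - 1) * (ξ 2 + 1) = 0 := by
      linear_combination h1eq.2
    rcases mul_eq_zero.mp hfac with h | h
    · linarith
    · have := hξ0 2; linarith
  rw [hx0, hx1, hx2, hx3]; ring


open Matrix Kronecker Polynomial in
set_option maxHeartbeats 1000000 in
theorem main (J B T : ℝ) (hJ : 0 < J) (hB : 0 ≤ B) (hT : 0 < T)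
    (ξ : Fin 4 → ℝ) (hξ0 : ∀ i, 0 ≤ ξ i) (hξmono : Antitone ξ)
    (hchar : (ρth J B T * (σy ⊗ₖ σy) * (ρth J B T).map (starRingEnd ℂ) *
        (σy ⊗ₖ σy)).charpoly = ∏ i : Fin 4, (X - Polynomial.C (((ξ i) ^ 2 : ℝ) : ℂ))) :
    max 0 (ξ 0 - ξ 1 - ξ 2 - ξ 3) =
      max (2 * Real.sinh (Real.sqrt (J ^ 2 + 4 * B ^ 2) / T) *
        J / Real.sqrt (J ^ 2 + 4 * B ^ 2) - 2) 0 ∧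
    2 * Real.sinh (Real.sqrt (J ^ 2 + 4 * B ^ 2) /
        (Real.sqrt (J ^ 2 + 4 * B ^ 2) / Real.arsinh (Real.sqrt (1 + 4 * B ^ 2 / J ^ 2)))) *
        J / Real.sqrt (J ^ 2 + 4 * B ^ 2) - 2 = 0 := by
  have hJ2 : (0:ℝ) < J ^ 2 + 4 * B ^ 2 := by positivity
  have hη : 0 < Real.sqrt (J ^ 2 + 4 * B ^ 2) := Real.sqrt_pos.mpr hJ2
  have hη2 : (Real.sqrt (J ^ 2 + 4 * B ^ 2)) ^ 2 = J ^ 2 + 4 * B ^ 2 := Real.sq_sqrt hJ2.le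
  set η := Real.sqrt (J ^ 2 + 4 * B ^ 2) with hηdef
  have hηne : η ≠ 0 := hη.ne'
  constructor
  · -- concurrence value
    set w := Real.sinh (η/T)*J/η with hwdef
    have hsinh : 0 < Real.sinh (η/T) := Real.sinh_pos_iff.mpr (div_pos hη hT)
    have hw : 0 < w := by
      rw [hwdef]
      exact div_pos (mul_pos hsinh hJ) hη
    set p := Real.exp (2*B/T) with hpdef
    set q := Real.exp (-(2*B/T)) with hqdef
    set u := Real.cosh (η/T) + 2*B*Real.sinh (η/T)/η with hudef
    set v := Real.cosh (η/T) - 2*B*Real.sinh (η/T)/η with hvdef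
    have hpq : p*q = 1 := by rw [hpdef, hqdef, ← Real.exp_add]; simp
    have huv : u*v = 1 + w^2 := by
      rw [hudef, hvdef, hwdef]
      have hc := Real.cosh_sq_sub_sinh_sq (η/T)
      field_simp
      linear_combination η^2 * hc + Real.sinh (η/T)^2 * hη2
    have hRmat : ρth J B T * (σy ⊗ₖ σy) * (ρth J B T).map (starRingEnd ℂ) * (σy ⊗ₖ σy)
        = F4 (Rho4 J B T η * Y4 * Rho4 J B T η * Y4) := by
      rw [rho_eq J B T η hT hη hη2, Y_eq, F4_map_conj, Rho4_conj,
        ← _root_.map_mul F4, ← _root_.map_mul F4, ← _root_.map_mul F4]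
    have hRho4show : Rho4 J B T η
        = !![(p:ℂ),0,0,0; 0,(u:ℂ),(w:ℂ),0; 0,(w:ℂ),(v:ℂ),0; 0,0,0,(q:ℂ)] := rfl
    have hr : 0 < Real.sqrt (1+w^2) := Real.sqrt_pos.mpr (by positivity)
    have hr2 : (Real.sqrt (1+w^2))^2 = 1+w^2 := Real.sq_sqrt (by positivity)
    set r := Real.sqrt (1+w^2) with hrdef
    have h1C : ((1+2*w^2+2*w*r : ℝ):ℂ) + ((1+2*w^2-2*w*r : ℝ):ℂ)
        = 2*((1+2*w^2 : ℝ):ℂ) := by push_cast; ring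
    have h2C : ((2*u*w : ℝ):ℂ) * ((2*v*w : ℝ):ℂ)
        = (((1+2*w^2+2*w*r : ℝ):ℂ) - ((1+2*w^2 : ℝ):ℂ))
          * (((1+2*w^2 : ℝ):ℂ) - ((1+2*w^2-2*w*r : ℝ):ℂ)) := by
      have huvC : (u:ℂ)*(v:ℂ) = 1 + (w:ℂ)^2 := by exact_mod_cast huv
      have hr2C : (r:ℂ)^2 = 1 + (w:ℂ)^2 := by exact_mod_cast hr2
      push_cast
      linear_combination (4*(w:ℂ)^2) * huvC - (4*(w:ℂ)^2) * hr2C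
    have hkey : (∏ i : Fin 4, (X - Polynomial.C (((ξ i)^2 : ℝ) : ℂ)))
        = (X - C 1) * (X - C 1) * (X - C ((1+2*w^2+2*w*r : ℝ):ℂ))
          * (X - C ((1+2*w^2-2*w*r : ℝ):ℂ)) := by
      rw [← hchar, hRmat]
      rw [Matrix.reindexAlgEquiv_apply, Matrix.charpoly_reindex]
      rw [hRho4show, R4_eq p u v w q hpq huv]
      exact charpoly_gen _ _ _ _ _ h1C h2C
    have heval : ∀ x : ℝ, (x - ξ 0^2)*(x - ξ 1^2)*(x - ξ 2^2)*(x - ξ 3^2)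
        = (x-1)*(x-1)*(x-(1+2*w^2+2*w*r))*(x-(1+2*w^2-2*w*r)) := by
      intro x
      have h := congrArg (Polynomial.eval (x:ℂ)) hkey
      simp only [Polynomial.eval_prod, Fin.prod_univ_four, Polynomial.eval_mul,
        Polynomial.eval_sub, Polynomial.eval_X, Polynomial.eval_C] at h
      exact_mod_cast h
    have hxi := xi_spec ξ hξ0 hξmono w r hw hr2 hr heval
    rw [hxi, max_comm]
    congr 1
    rw [hwdef]
    ring
  · -- critical temperature
    have hx : Real.sqrt (1 + 4 * B ^ 2 / J ^ 2) = η/J := by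
      rw [show (1 + 4 * B ^ 2 / J ^ 2 : ℝ) = (J ^ 2 + 4 * B ^ 2)/(J ^ 2) from by
        field_simp]
      rw [Real.sqrt_div hJ2.le, Real.sqrt_sq hJ.le, hηdef]
    rw [hx]
    have hars : 0 < Real.arsinh (η/J) := Real.arsinh_pos_iff.mpr (div_pos hη hJ)
    have hdd : η / (η / Real.arsinh (η/J)) = Real.arsinh (η/J) := by
      field_simp
    rw [hdd, Real.sinh_arsinh]
    field_simp
    norm_num


end Stmt15Aux

/-- Wootters concurrence of the thermal state of the two-qubit XY model with
`γ̃ = 0, δ = 1`: if `ξ₁ ≥ ξ₂ ≥ ξ₃ ≥ ξ₄ ≥ 0` are the square roots of the eigenvalues of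
`ρ(σ_y⊗σ_y)ρ*(σ_y⊗σ_y)`, then `C(ρ) = max(0, ξ₁ − ξ₂ − ξ₃ − ξ₄)` equals
`max(2 sinh(√(J²+4B²)/T)·J/√(J²+4B²) − 2, 0)`, and the critical temperature at which
this expression vanishes is `T_c = √(J²+4B²)/arcsinh(√(1 + 4B²/J²))`. -/
theorem stmt_15 (J B T : ℝ) (hJ : 0 < J) (hB : 0 ≤ B) (hT : 0 < T)
    (ξ : Fin 4 → ℝ) (hξ0 : ∀ i, 0 ≤ ξ i) (hξmono : Antitone ξ)
    (hchar : (ρth J B T * (σy ⊗ₖ σy) * (ρth J B T).map (starRingEnd ℂ) *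
        (σy ⊗ₖ σy)).charpoly = ∏ i : Fin 4, (X - Polynomial.C (((ξ i) ^ 2 : ℝ) : ℂ))) :
    max 0 (ξ 0 - ξ 1 - ξ 2 - ξ 3) =
      max (2 * Real.sinh (Real.sqrt (J ^ 2 + 4 * B ^ 2) / T) *
        J / Real.sqrt (J ^ 2 + 4 * B ^ 2) - 2) 0 ∧
    2 * Real.sinh (Real.sqrt (J ^ 2 + 4 * B ^ 2) /
        (Real.sqrt (J ^ 2 + 4 * B ^ 2) / Real.arsinh (Real.sqrt (1 + 4 * B ^ 2 / J ^ 2)))) *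
        J / Real.sqrt (J ^ 2 + 4 * B ^ 2) - 2 = 0 :=
  Stmt15Aux.main J B T hJ hB hT ξ hξ0 hξmono hchar
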